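/- arXiv:1909.08422 — 2 statements merged into one kernel-verified Lean document; each statement's English description precedes it below -/
import Mathlib

section
/- Let v̄_1,…,v̄_{d'} be linearly independent vectors in ℝ^d with 1 ≤ d' ≤ d − 1, and let v̄^{(1)},…,v̄^{(d)} ∈ ℝ^{d'} denote the columns of the d'×d matrix whose rows are v̄_1,…,v̄_{d'}. Then the following are equivalent: (i) there exist d − d' linearly independent (over ℝ) integer vectors k̄_1,…,k̄_{d−d'} ∈ ℤ^d each orthogonal to every v̄_1,…,v̄_{d'}; (ii) there exists a subset S = {i_1,…,i_{d−d'}} ⊂ {1,…,d} with complement {j_1,…,j_{d'}} such that the columns v̄^{(j_1)},…,v̄^{(j_{d'})} are linearly independent and the d'×(d−d') matrix (v̄^{(j_1)},…,v̄^{(j_{d'})})^{−1}(v̄^{(i_1)},…,v̄^{(i_{d−d'})}) has all rational entries. -/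
open Matrix Set

lemma aux_num_cast (q : ℚ) (D : ℤ) (h : (q.den : ℤ) ∣ D) :
    (((q * D).num : ℤ) : ℚ) = q * D := by
  obtain ⟨m, hm⟩ := h
  have hden : (q.den : ℚ) ≠ 0 := by exact_mod_cast q.den_nz
  have h1 : q * (q.den : ℚ) = (q.num : ℚ) := by
    exact Rat.mul_den_eq_num q
  have : q * (D : ℚ) = ((q.num * m : ℤ) : ℚ) := by
    rw [hm]; push_cast; rw [← mul_assoc, h1]
  rw [this, Rat.num_intCast]

lemma aux_sum_split {d d' e : ℕ} (f : Fin d' → Fin d) (g : Fin e → Fin d)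
    (hf : Function.Injective f) (hg : Function.Injective g)
    (hfg : ∀ i j, f i ≠ g j) (F : Fin d → ℝ)
    (h0 : ∀ l, (∀ i, f i ≠ l) → (∀ j, g j ≠ l) → F l = 0) :
    ∑ l, F l = (∑ i, F (f i)) + ∑ j, F (g j) := by
  classical
  have hdisj : Disjoint (Finset.univ.image f) (Finset.univ.image g) := by
    rw [Finset.disjoint_left]
    rintro x hx hy
    obtain ⟨i, -, rfl⟩ := Finset.mem_image.mp hx
    obtain ⟨j, -, hj⟩ := Finset.mem_image.mp hy
    exact hfg i j hj.symm
  have h1 : ∑ l ∈ (Finset.univ.image f ∪ Finset.univ.image g), F l = ∑ l, F l := by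
    apply Finset.sum_subset (Finset.subset_univ _)
    intro x _ hx
    rw [Finset.mem_union, Finset.mem_image, Finset.mem_image] at hx
    push_neg at hx
    exact h0 x (fun i => hx.1 i (Finset.mem_univ i)) (fun j => hx.2 j (Finset.mem_univ j))
  rw [← h1, Finset.sum_union hdisj, Finset.sum_image (fun a _ b _ h => hf h),
    Finset.sum_image (fun a _ b _ h => hg h)]

/-- **Lemma 4.2.** For linearly independent rows `v̄_1,…,v̄_{d'}` of a
`d'×d` real matrix `V`, there exist `d − d'` linearly independent integer vectors
orthogonal to all the rows iff there is a splitting of the columns into a set of `d'`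
linearly independent columns `B` and the remaining `d − d'` columns `C` such that
`B⁻¹C` is a rational matrix. -/
theorem stmt7 (d d' : ℕ) (hd1 : 1 ≤ d') (hd2 : d' ≤ d - 1)
    (V : Matrix (Fin d') (Fin d) ℝ)
    (hV : LinearIndependent ℝ (fun i : Fin d' => V i)) :
    (∃ k : Fin (d - d') → (Fin d → ℤ),
        LinearIndependent ℝ (fun j : Fin (d - d') => fun l : Fin d => ((k j l : ℝ))) ∧
        ∀ j : Fin (d - d'), ∀ i : Fin d', ∑ l : Fin d, (k j l : ℝ) * V i l = 0) ↔
    (∃ (g : Fin (d - d') → Fin d) (f : Fin d' → Fin d),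
        Function.Injective g ∧ Function.Injective f ∧ (∀ i j, f i ≠ g j) ∧
        LinearIndependent ℝ (fun j : Fin d' => fun i : Fin d' => V i (f j)) ∧
        ∀ i : Fin d', ∀ j : Fin (d - d'), ∃ q : ℚ,
          ((V.submatrix id f)⁻¹ * V.submatrix id g) i j = (q : ℝ)) := by
  classical
  have hdd : d' + (d - d') = d := by omega
  have he1 : 1 ≤ d - d' := by omega
  constructor
  · rintro ⟨k, hk1, hk2⟩
    -- the real matrix of the integer vectors
    set Kr : Matrix (Fin (d - d')) (Fin d) ℝ := Matrix.of fun j l => (k j l : ℝ) with hKr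
    have hKrli : LinearIndependent ℝ Kr := hk1
    have hKrank : Kr.rank = d - d' := by
      rw [hKrli.rank_matrix, Fintype.card_fin]
    have hspan : Module.finrank ℝ (Submodule.span ℝ (Set.range Krᵀ)) = d - d' := by
      rw [show Set.range Krᵀ = Set.range Krᵀ.row from rfl, ← Matrix.rank_eq_finrank_span_row,
        Matrix.rank_transpose, hKrank]
    obtain ⟨b, hbsub, hbspan, hbind⟩ := exists_linearIndependent ℝ (Set.range Krᵀ)
    haveI : Fintype b := (Set.Finite.subset (Set.finite_range _) hbsub).fintype
    have hbcard : Fintype.card b = d - d' := by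
      have h6 : Module.finrank ℝ (Submodule.span ℝ b) = b.toFinset.card :=
        finrank_span_set_eq_card hbind
      rw [hbspan, hspan] at h6
      rw [← Set.toFinset_card, ← h6]
    let eb : Fin (d - d') ≃ b := (Fintype.equivFinOfCardEq hbcard).symm
    choose g0 hg0 using fun x : b => hbsub x.2
    set g : Fin (d - d') → Fin d := fun j => g0 (eb j) with hgdef
    have hg : Function.Injective g := by
      intro j1 j2 h
      apply eb.injective
      apply Subtype.ext
      rw [← hg0 (eb j1), ← hg0 (eb j2)]
      exact congrArg Krᵀ h
    have hcolind : LinearIndependent ℝ (fun j => Krᵀ (g j)) := by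
      have h7 : (fun j => Krᵀ (g j)) = fun j => ((eb j : b) : Fin (d - d') → ℝ) :=
        funext fun j => hg0 (eb j)
      rw [h7]
      exact hbind.comp (fun j => eb j) fun a b h => eb.injective h
    set A : Matrix (Fin (d - d')) (Fin (d - d')) ℝ := Matrix.of fun j j' => Kr j (g j') with hA
    have hAu : IsUnit A := by
      rw [← Matrix.linearIndependent_cols_iff_isUnit]
      exact hcolind
    -- f enumerates the complement of the range of g
    have hscard : (Finset.univ.image g)ᶜ.card = d' := by
      rw [Finset.card_compl, Finset.card_image_of_injective _ hg, Finset.card_univ,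
        Fintype.card_fin, Fintype.card_fin]
      omega
    set f : Fin d' → Fin d :=
      fun i => ((Finset.univ.image g)ᶜ.orderIsoOfFin hscard i : Fin d) with hfdef
    have hf : Function.Injective f := fun i1 i2 h =>
      ((Finset.univ.image g)ᶜ.orderIsoOfFin hscard).injective (Subtype.ext h)
    have hfg : ∀ i j, f i ≠ g j := by
      intro i j h
      have h8 : f i ∈ (Finset.univ.image g)ᶜ :=
        (((Finset.univ.image g)ᶜ.orderIsoOfFin hscard) i).2
      rw [Finset.mem_compl] at h8
      exact h8 (h ▸ Finset.mem_image_of_mem g (Finset.mem_univ j))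
    have hcover : ∀ l, (∃ j, g j = l) ∨ (∃ i, f i = l) := by
      intro l
      by_cases hl : l ∈ Finset.univ.image g
      · obtain ⟨j, -, hj⟩ := Finset.mem_image.mp hl
        exact Or.inl ⟨j, hj⟩
      · refine Or.inr ⟨((Finset.univ.image g)ᶜ.orderIsoOfFin hscard).symm
          ⟨l, Finset.mem_compl.mpr hl⟩, ?_⟩
        rw [hfdef]
        dsimp only
        rw [OrderIso.apply_symm_apply]
    -- the columns of V indexed by f form an invertible matrix
    have hVrowB : LinearIndependent ℝ (fun i : Fin d' => fun i' : Fin d' => V i (f i')) := by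
      rw [Fintype.linearIndependent_iff]
      intro x hx
      set w : Fin d → ℝ := fun l => ∑ i, x i * V i l with hw
      have hwf : ∀ i', w (f i') = 0 := by
        intro i'
        have h9 := congrFun hx i'
        simpa [hw] using h9
      have hwK : ∀ j, ∑ j', A j j' * w (g j') = 0 := by
        intro j
        have h10 : ∑ l, w l * Kr j l = 0 := by
          rw [hw]
          dsimp only
          calc ∑ l, (∑ i, x i * V i l) * Kr j l
              = ∑ i, x i * ∑ l, (k j l : ℝ) * V i l := by
                simp only [Finset.sum_mul]
                rw [Finset.sum_comm]
                refine Finset.sum_congr rfl fun i _ => ?_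
                rw [Finset.mul_sum]
                refine Finset.sum_congr rfl fun l _ => ?_
                show x i * V i l * Kr j l = x i * ((k j l : ℝ) * V i l)
                rw [hKr]
                dsimp only [Matrix.of_apply]
                ring
            _ = 0 := by simp [hk2]
        have h11 := aux_sum_split f g hf hg hfg (fun l => w l * Kr j l) (fun l h1 h2 =>
          ((hcover l).elim (fun hj => absurd hj.choose_spec (h2 _))
            (fun hi => absurd hi.choose_spec (h1 _))))
        rw [h10] at h11
        have h12 : ∑ i', w (f i') * Kr j (f i') = 0 := by
          refine Finset.sum_eq_zero fun i' _ => ?_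
          rw [hwf, zero_mul]
        rw [h12, zero_add] at h11
        rw [show (∑ j', A j j' * w (g j')) = ∑ j', w (g j') * Kr j (g j') from
          Finset.sum_congr rfl fun j' _ => mul_comm _ _]
        exact h11.symm
      have hwg0 : ∀ j', w (g j') = 0 := by
        have h12 : A *ᵥ (fun j' => w (g j')) = A *ᵥ 0 := by
          rw [Matrix.mulVec_zero]
          funext j
          exact hwK j
        have h13 := Matrix.mulVec_injective_iff_isUnit.mpr hAu h12
        exact fun j' => congrFun h13 j'
      have hweq : ∀ l, w l = 0 := fun l =>
        (hcover l).elim (fun ⟨j0, hj⟩ => hj ▸ hwg0 j0) fun ⟨i0, hi⟩ => hi ▸ hwf i0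
      have h14 : ∑ i, x i • V i = 0 := by
        funext l
        simpa [hw] using hweq l
      exact Fintype.linearIndependent_iff.mp hV x h14
    have hBu : IsUnit (V.submatrix id f) := by
      rw [← Matrix.linearIndependent_rows_iff_isUnit]
      exact hVrowB
    -- kernel of V has dimension d - d' and is spanned by the integer vectors
    set L := V.mulVecLin with hL
    have hV' : LinearIndependent ℝ V := hV
    have hrankV : V.rank = d' := by rw [hV'.rank_matrix, Fintype.card_fin]
    have hker : Module.finrank ℝ (LinearMap.ker L) = d - d' := by
      have h15 := LinearMap.finrank_range_add_finrank_ker L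
      rw [Module.finrank_fintype_fun_eq_card, Fintype.card_fin] at h15
      have h16 : Module.finrank ℝ (LinearMap.range L) = d' := hrankV
      omega
    have hkmem : ∀ j, (fun l => (k j l : ℝ)) ∈ LinearMap.ker L := by
      intro j
      rw [LinearMap.mem_ker]
      funext i
      show ∑ l, V i l * (k j l : ℝ) = 0
      rw [← hk2 j i]
      exact Finset.sum_congr rfl fun l _ => mul_comm _ _
    set kc : Fin (d - d') → LinearMap.ker L := fun j => ⟨fun l => (k j l : ℝ), hkmem j⟩
      with hkc
    have hkcind : LinearIndependent ℝ kc :=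
      LinearIndependent.of_comp (LinearMap.ker L).subtype hk1
    haveI : Nonempty (Fin (d - d')) := ⟨⟨0, by omega⟩⟩
    have hsp : Submodule.span ℝ (Set.range kc) = ⊤ :=
      hkcind.span_eq_top_of_card_eq_finrank (by rw [Fintype.card_fin, hker])
    -- the matrix B and the quotient matrix M
    have hBdet : IsUnit (V.submatrix id f).det := (Matrix.isUnit_iff_isUnit_det _).mp hBu
    set M := (V.submatrix id f)⁻¹ * V.submatrix id g with hM
    have hBM : V.submatrix id f * M = V.submatrix id g := by
      rw [hM, ← Matrix.mul_assoc, Matrix.mul_nonsing_inv _ hBdet, Matrix.one_mul]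
    have hMkey : ∀ i j, ∑ i', V i (f i') * M i' j = V i (g j) := by
      intro i j
      have h18 := congrFun (congrFun hBM i) j
      simpa [Matrix.mul_apply] using h18
    -- the canonical kernel vectors built from M
    set u : Fin (d - d') → Fin d → ℝ := fun j l =>
      if l = g j then 1 else if h : ∃ i, f i = l then -(M h.choose j) else 0 with hu
    have huf : ∀ j i0, u j (f i0) = -(M i0 j) := by
      intro j i0
      have h3 : f i0 ≠ g j := hfg i0 j
      have h4 : ∃ i1, f i1 = f i0 := ⟨i0, rfl⟩
      rw [hu]
      dsimp only
      rw [if_neg h3, dif_pos h4]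
      rw [hf h4.choose_spec]
    have hug : ∀ j j', u j (g j') = if j' = j then 1 else 0 := by
      intro j j'
      by_cases h : j' = j
      · subst h
        rw [if_pos rfl, hu]
        simp
      · have h3 : g j' ≠ g j := fun hh => h (hg hh)
        have h4 : ¬ ∃ i1, f i1 = g j' := fun ⟨i1, hi⟩ => hfg i1 j' hi
        rw [if_neg h, hu]
        dsimp only
        rw [if_neg h3, dif_neg h4]
    have humem : ∀ j, u j ∈ LinearMap.ker L := by
      intro j
      rw [LinearMap.mem_ker]
      funext i
      show ∑ l, V i l * u j l = 0
      rw [aux_sum_split f g hf hg hfg (fun l => V i l * u j l) (fun l h1 h2 =>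
        ((hcover l).elim (fun hj => absurd hj.choose_spec (h2 _))
          (fun hi => absurd hi.choose_spec (h1 _))))]
      have e1 : ∑ i0, V i (f i0) * u j (f i0) = -∑ i0, V i (f i0) * M i0 j := by
        rw [← Finset.sum_neg_distrib]
        exact Finset.sum_congr rfl fun i0 _ => by rw [huf]; ring
      have e2 : ∑ j', V i (g j') * u j (g j') = V i (g j) := by
        rw [Finset.sum_congr rfl fun j' _ => by rw [hug j j']]
        simp [mul_ite, Finset.sum_ite_eq']
      rw [e1, e2, hMkey i j]
      exact neg_add_cancel _
    -- rationality of A⁻¹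
    set Aq : Matrix (Fin (d - d')) (Fin (d - d')) ℚ :=
      Matrix.of fun j j' => (k j (g j') : ℚ) with hAq
    have hAmap : A = Aq.map (Rat.castHom ℝ) := by
      funext j j'
      simp [hA, hAq, Matrix.map_apply, hKr]
    have hAinv : ∀ j j', A⁻¹ j j' = ((Aq.det⁻¹ * Aq.adjugate j j' : ℚ) : ℝ) := by
      intro j j'
      have hdet : A.det = ((Aq.det : ℚ) : ℝ) := by
        rw [hAmap, ← RingHom.mapMatrix_apply, ← RingHom.map_det]
        simp
      have hadj : A.adjugate j j' = ((Aq.adjugate j j' : ℚ) : ℝ) := by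
        rw [hAmap, ← RingHom.mapMatrix_apply, ← RingHom.map_adjugate]
        simp [RingHom.mapMatrix_apply, Matrix.map_apply]
      rw [Matrix.inv_def, Matrix.smul_apply, hdet, hadj, Ring.inverse_eq_inv, smul_eq_mul]
      push_cast
      ring
    refine ⟨g, f, hg, hf, hfg, Matrix.linearIndependent_cols_iff_isUnit.mpr hBu, ?_⟩
    intro i j
    have h19 : (⟨u j, humem j⟩ : LinearMap.ker L) ∈ Submodule.span ℝ (Set.range kc) := by
      rw [hsp]
      trivial
    obtain ⟨c, hc⟩ := (Submodule.mem_span_range_iff_exists_fun ℝ).mp h19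
    have hcval : ∑ j'', c j'' • (fun l => (k j'' l : ℝ)) = u j := by
      have h20 := congrArg ((LinearMap.ker L).subtype) hc
      simpa [map_sum] using h20
    have hcA : ∀ j', ∑ j'', c j'' * (k j'' (g j') : ℝ) = if j' = j then 1 else 0 := by
      intro j'
      have h21 := congrFun hcval (g j')
      simp only [Finset.sum_apply, Pi.smul_apply, smul_eq_mul] at h21
      rw [h21, hug]
    have hcvec : c = fun j'' => A⁻¹ j j'' := by
      have h22 : Matrix.vecMul c A = fun j' => if j' = j then 1 else 0 := by
        funext j'
        show ∑ j'', c j'' * A j'' j' = _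
        exact hcA j'
      have h23 : c = Matrix.vecMul (fun j' => if j' = j then (1 : ℝ) else 0) A⁻¹ := by
        rw [← h22, Matrix.vecMul_vecMul,
          Matrix.mul_nonsing_inv _ ((Matrix.isUnit_iff_isUnit_det _).mp hAu),
          Matrix.vecMul_one]
      rw [h23]
      funext j''
      show ∑ j', (if j' = j then (1 : ℝ) else 0) * A⁻¹ j' j'' = A⁻¹ j j''
      simp [ite_mul]
    refine ⟨-∑ j'', (Aq.det⁻¹ * Aq.adjugate j j'') * (k j'' (f i) : ℚ), ?_⟩
    have h24 : M i j = -(u j (f i)) := by rw [huf]; ring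
    have h25 := congrFun hcval (f i)
    simp only [Finset.sum_apply, Pi.smul_apply, smul_eq_mul] at h25
    have h26 : ∑ j'', c j'' * (k j'' (f i) : ℝ)
        = ((∑ j'', (Aq.det⁻¹ * Aq.adjugate j j'') * (k j'' (f i) : ℚ) : ℚ) : ℝ) := by
      push_cast
      refine Finset.sum_congr rfl fun j'' _ => ?_
      rw [congrFun hcvec j'', hAinv j j'']
      push_cast
      ring
    show M i j = _
    rw [h24, ← h25, h26]
    push_cast
    ring
  · rintro ⟨g, f, hg, hf, hfg, hBcols, hq⟩
    -- B is invertible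
    have hBu : IsUnit (V.submatrix id f) := by
      rw [← linearIndependent_cols_iff_isUnit]
      exact hBcols
    choose q' hq' using hq
    have hBM : V.submatrix id f * ((V.submatrix id f)⁻¹ * V.submatrix id g)
        = V.submatrix id g := by
      rw [← Matrix.mul_assoc,
        Matrix.mul_nonsing_inv _ ((Matrix.isUnit_iff_isUnit_det _).mp hBu), Matrix.one_mul]
    have key : ∀ i j, V i (g j) = ∑ i', V i (f i') * ((q' i' j : ℚ) : ℝ) := by
      intro i j
      have h2 := congrFun (congrFun hBM i) j
      rw [Matrix.mul_apply] at h2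
      rw [show V i (g j) = V.submatrix id g i j from rfl, ← h2]
      refine Finset.sum_congr rfl fun i' _ => ?_
      rw [Matrix.submatrix_apply, id_eq, hq']
    -- common denominator
    set D : ℤ := ∏ i, ∏ j, ((q' i j).den : ℤ) with hD
    have hD0 : (D : ℝ) ≠ 0 := by
      rw [hD]
      push_cast
      refine Finset.prod_ne_zero_iff.mpr fun i _ => Finset.prod_ne_zero_iff.mpr fun j _ => ?_
      exact_mod_cast (q' i j).den_nz
    have hDdvd : ∀ i j, (((q' i j).den : ℤ)) ∣ D := by
      intro i j
      rw [hD]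
      exact dvd_trans
        (Finset.dvd_prod_of_mem (fun j => ((q' i j).den : ℤ)) (Finset.mem_univ j))
        (Finset.dvd_prod_of_mem (fun i => ∏ j, ((q' i j).den : ℤ)) (Finset.mem_univ i))
    set qv : Fin (d - d') → Fin d → ℚ := fun j l =>
      if l = g j then 1 else if h : ∃ i, f i = l then -q' h.choose j else 0 with hqv
    have hqvden : ∀ j l, ((qv j l).den : ℤ) ∣ D := by
      intro j l
      rw [hqv]
      dsimp only
      split_ifs with h1 h2
      · simp
      · rw [Rat.neg_den]
        exact hDdvd _ _
      · simp
    have hcast : ∀ j l, (((qv j l * D).num : ℤ) : ℝ) = ((qv j l : ℚ) : ℝ) * (D : ℝ) := by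
      intro j l
      have h5 := aux_num_cast (qv j l) D (hqvden j l)
      exact_mod_cast congrArg (fun x : ℚ => (x : ℝ)) h5
    refine ⟨fun j l => (qv j l * D).num, ?_, ?_⟩
    · rw [Fintype.linearIndependent_iff]
      intro c hc j₀
      have h3 := congrFun hc (g j₀)
      simp only [Finset.sum_apply, Pi.smul_apply, smul_eq_mul, Pi.zero_apply] at h3
      have h4 : ∀ j, (((qv j (g j₀) * D).num : ℤ) : ℝ) = if j = j₀ then (D : ℝ) else 0 := by
        intro j
        rw [hcast]
        by_cases h : j = j₀
        · subst h
          rw [if_pos rfl, hqv]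
          simp
        · have h1 : g j₀ ≠ g j := fun hh => h (hg hh).symm
          have h2 : ¬ ∃ i, f i = g j₀ := fun ⟨i, hi⟩ => hfg i j₀ hi
          rw [if_neg h, hqv]
          dsimp only
          rw [if_neg h1, dif_neg h2]
          simp
      have h5 : ∑ j, c j * (if j = j₀ then (D : ℝ) else 0) = 0 :=
        (Finset.sum_congr rfl fun j _ => by rw [h4 j]).symm.trans h3
      simp only [mul_ite, mul_zero, Finset.sum_ite_eq', Finset.mem_univ, if_pos] at h5
      exact (mul_eq_zero.mp h5).resolve_right hD0
    · intro j i
      have hsum : ∑ l, (((qv j l * D).num : ℤ) : ℝ) * V i l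
          = (D : ℝ) * ∑ l, ((qv j l : ℚ) : ℝ) * V i l := by
        rw [Finset.mul_sum]
        exact Finset.sum_congr rfl fun l _ => by rw [hcast]; ring
      rw [hsum]
      have hzero : ∑ l, ((qv j l : ℚ) : ℝ) * V i l = 0 := by
        rw [aux_sum_split f g hf hg hfg _ (by
          intro l h1 h2
          have h3 : l ≠ g j := fun hh => h2 j hh.symm
          have h4 : ¬ ∃ i0, f i0 = l := fun ⟨i0, hi⟩ => h1 i0 hi
          rw [hqv]
          dsimp only
          rw [if_neg h3, dif_neg h4]
          simp)]
        have hA : ∀ i', qv j (f i') = -q' i' j := by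
          intro i'
          have h3 : f i' ≠ g j := hfg i' j
          have h4 : ∃ i0, f i0 = f i' := ⟨i', rfl⟩
          rw [hqv]
          dsimp only
          rw [if_neg h3, dif_pos h4]
          congr 2
          exact hf h4.choose_spec
        have hB2 : ∀ j', qv j (g j') = if j' = j then 1 else 0 := by
          intro j'
          by_cases h : j' = j
          · subst h
            rw [if_pos rfl, hqv]
            simp
          · have h3 : g j' ≠ g j := fun hh => h (hg hh)
            have h4 : ¬ ∃ i0, f i0 = g j' := fun ⟨i0, hi⟩ => hfg i0 j' hi
            rw [if_neg h, hqv]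
            dsimp only
            rw [if_neg h3, dif_neg h4]
        have e1 : ∑ i', ((qv j (f i') : ℚ) : ℝ) * V i (f i')
            = -∑ i', V i (f i') * ((q' i' j : ℚ) : ℝ) := by
          rw [← Finset.sum_neg_distrib]
          exact Finset.sum_congr rfl fun i' _ => by rw [hA]; push_cast; ring
        have e2 : ∑ j', ((qv j (g j') : ℚ) : ℝ) * V i (g j') = V i (g j) := by
          rw [Finset.sum_congr rfl fun j' _ => by rw [hB2 j']]
          simp [apply_ite (fun x : ℚ => (x : ℝ)), ite_mul, Finset.sum_ite_eq']
        rw [e1, e2, key i j]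
        exact neg_add_cancel _
      rw [hzero, mul_zero]
end

section
/- Let M ∈ ℝ^{d×d} be nondegenerate. Then there exist d − 1 linearly independent vectors k̄_1,…,k̄_{d−1} ∈ ℤ^d \ {0} with ⟨k̄_j, M⁻¹e_d⟩ = 0 for all j = 1,…,d−1 if and only if the last column M⁻¹e_d of M⁻¹ is a nonzero real scalar multiple of an integer vector. -/
open Matrix

lemma key (n : ℕ) (v : Fin (n+1) → ℝ) (hv : v ≠ 0) :
    (∃ k : Fin n → (Fin (n+1) → ℤ),
      (∀ j, k j ≠ 0) ∧
      LinearIndependent ℝ (fun j : Fin n => fun l : Fin (n+1) => ((k j l : ℝ))) ∧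
      ∀ j : Fin n, ∑ l : Fin (n+1), (k j l : ℝ) * v l = 0) ↔
    (∃ (t : ℝ) (z : Fin (n+1) → ℤ), t ≠ 0 ∧ ∀ l, v l = t * (z l : ℝ)) := by
  constructor
  · rintro ⟨k, hk0, hkli, hkperp⟩
    -- rational kernel vector
    set kq : Matrix (Fin n) (Fin (n+1)) ℚ := fun j l => (k j l : ℚ) with hkq
    have hker : LinearMap.ker kq.mulVecLin ≠ ⊥ := by
      intro h
      have hinj := LinearMap.ker_eq_bot.mp h
      have hle := LinearMap.finrank_le_finrank_of_injective hinj
      simp [Module.finrank_pi] at hle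
    obtain ⟨x, hx_mem, hx0⟩ := Submodule.exists_mem_ne_zero_of_ne_bot hker
    have hx_ker : ∀ j, ∑ l, (k j l : ℚ) * x l = 0 := by
      intro j
      have := congrFun (LinearMap.mem_ker.mp hx_mem) j
      exact this
    -- clear denominators
    set N : ℤ := ∏ l, ((x l).den : ℤ) with hN
    have hden : ∀ l, ((x l).den : ℤ) ∣ N := fun l =>
      Finset.dvd_prod_of_mem _ (Finset.mem_univ l)
    have hN0 : N ≠ 0 := by
      rw [hN]
      exact Finset.prod_ne_zero_iff.mpr fun l _ => by
        exact_mod_cast (x l).den_nz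
    set z : Fin (n+1) → ℤ := fun l => (x l).num * (N / ((x l).den : ℤ)) with hzdef
    have hzc : ∀ l, (z l : ℚ) = (N : ℚ) * x l := by
      intro l
      obtain ⟨c, hc⟩ := hden l
      have hdz : ((x l).den : ℤ) ≠ 0 := by exact_mod_cast (x l).den_nz
      have hz : z l = (x l).num * c := by
        rw [hzdef]; simp only []; rw [hc, Int.mul_ediv_cancel_left _ hdz]
      have hxl : (x l : ℚ) * (x l).den = (x l).num := Rat.mul_den_eq_num _
      rw [hz]
      push_cast [hc]
      rw [← hxl]; ring
    -- z is nonzero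
    obtain ⟨l0, hl0⟩ := Function.ne_iff.mp hx0
    have hz0 : z l0 ≠ 0 := by
      intro h
      apply hl0
      have := hzc l0
      rw [h] at this
      simp at this
      rcases this with h | h
      · exact absurd (by exact_mod_cast h) hN0
      · exact h
    -- real kernel
    set kr : Matrix (Fin n) (Fin (n+1)) ℝ := fun j l => (k j l : ℝ) with hkr
    set zr : Fin (n+1) → ℝ := fun l => (z l : ℝ) with hzr
    have hzr0 : zr ≠ 0 := by
      intro h
      apply hz0
      have := congrFun h l0
      simpa [hzr] using this
    have hvW : v ∈ LinearMap.ker kr.mulVecLin := by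
      rw [LinearMap.mem_ker]
      funext j
      exact hkperp j
    have hq : ∀ j, ∑ l, (k j l : ℚ) * (z l : ℚ) = 0 := by
      intro j
      calc ∑ l, (k j l : ℚ) * (z l : ℚ) = (N : ℚ) * ∑ l, (k j l : ℚ) * x l := by
            rw [Finset.mul_sum]
            exact Finset.sum_congr rfl fun l _ => by rw [hzc l]; ring
        _ = 0 := by rw [hx_ker j, mul_zero]
    have hzW : zr ∈ LinearMap.ker kr.mulVecLin := by
      rw [LinearMap.mem_ker]
      funext j
      have h1 := hq j
      have h2 : ((∑ l, (k j l : ℚ) * (z l : ℚ) : ℚ) : ℝ) = 0 := by rw [h1]; simp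
      push_cast at h2
      exact h2
    -- kernel has dimension 1
    have hinjT : Function.Injective krᵀ.mulVecLin := by
      rw [← LinearMap.ker_eq_bot]
      rw [Submodule.eq_bot_iff]
      intro c hc
      rw [LinearMap.mem_ker] at hc
      have hsum : ∑ j, c j • (fun l => kr j l) = 0 := by
        funext l
        have := congrFun hc l
        simpa [Matrix.mulVecLin_apply, Matrix.mulVec, dotProduct, Finset.sum_apply,
          mul_comm, Matrix.vecMul] using this
      funext j
      exact Fintype.linearIndependent_iff.mp hkli c hsum j
    have hrankT : krᵀ.rank = n := by
      rw [Matrix.rank, LinearMap.finrank_range_of_inj hinjT]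
      simp [Module.finrank_pi]
    have hrank : kr.rank = n := by rw [← Matrix.rank_transpose]; exact hrankT
    have hker1 : Module.finrank ℝ (LinearMap.ker kr.mulVecLin) = 1 := by
      have h := LinearMap.finrank_range_add_finrank_ker kr.mulVecLin
      have h2 : Module.finrank ℝ (LinearMap.range kr.mulVecLin) = n := hrank
      rw [h2] at h
      simp [Module.finrank_pi] at h
      omega
    have hle : (ℝ ∙ zr) ≤ LinearMap.ker kr.mulVecLin := by
      rw [Submodule.span_le, Set.singleton_subset_iff]
      exact hzW
    have heq : (ℝ ∙ zr) = LinearMap.ker kr.mulVecLin := by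
      apply Submodule.eq_of_le_of_finrank_le hle
      rw [hker1, finrank_span_singleton hzr0]
    obtain ⟨t, ht⟩ := Submodule.mem_span_singleton.mp (heq ▸ hvW)
    have ht0 : t ≠ 0 := by
      intro h
      apply hv
      rw [← ht, h, zero_smul]
    exact ⟨t, z, ht0, fun l => by rw [← ht]; simp [hzr]⟩
  · rintro ⟨t, z, ht, hz⟩
    obtain ⟨i0, hi0⟩ := Function.ne_iff.mp hv
    have hzi : z i0 ≠ 0 := by
      intro h
      apply hi0
      rw [hz i0, h]; simp
    set k : Fin n → Fin (n+1) → ℤ := fun j l =>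
      if l = i0 then -z (i0.succAbove j) else if l = i0.succAbove j then z i0 else 0
      with hk
    have hne : ∀ j, i0.succAbove j ≠ i0 := fun j => Fin.succAbove_ne i0 j
    refine ⟨k, ?_, ?_, ?_⟩
    · intro j h
      have := congrFun h (i0.succAbove j)
      simp [hk, hne j] at this
      exact hzi this
    · rw [Fintype.linearIndependent_iff]
      intro g hg j
      have hgl := congrFun hg (i0.succAbove j)
      rw [Finset.sum_apply] at hgl
      simp only [Pi.smul_apply, Pi.zero_apply, smul_eq_mul] at hgl
      have : ∑ j' : Fin n, g j' * ((k j' (i0.succAbove j) : ℝ)) = g j * (z i0 : ℝ) := by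
        rw [Finset.sum_eq_single j]
        · simp [hk, hne j]
        · intro b _ hb
          have h1 : i0.succAbove j ≠ i0.succAbove b := fun h =>
            hb (Fin.succAbove_right_injective h).symm
          simp [hk, hne j, h1]
        · simp
      rw [this] at hgl
      have : g j * (z i0 : ℝ) = 0 := hgl
      rcases mul_eq_zero.mp this with h | h
      · exact h
      · exact absurd (by exact_mod_cast h) hzi
    · intro j
      rw [Fintype.sum_eq_add i0 (i0.succAbove j) (Ne.symm (hne j))
        (f := fun l => (k j l : ℝ) * v l)]
      · rw [hz i0, hz (i0.succAbove j)]
        simp [hk, hne j]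
        ring
      · intro x ⟨hx1, hx2⟩
        simp [hk, hx1, hx2]

/-- For a nondegenerate `M ∈ ℝ^{d×d}`, there exist `d − 1` linearly
independent nonzero integer vectors orthogonal to the last column `M⁻¹e_d` of `M⁻¹`
iff that column is a nonzero real scalar multiple of an integer vector. -/
theorem stmt16 (d : ℕ) (hd : 0 < d)
    (M : Matrix (Fin d) (Fin d) ℝ) (hM : M.det ≠ 0) :
    (∃ k : Fin (d - 1) → (Fin d → ℤ),
      (∀ j, k j ≠ 0) ∧
      LinearIndependent ℝ (fun j : Fin (d - 1) => fun l : Fin d => ((k j l : ℝ))) ∧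
      ∀ j : Fin (d - 1), ∑ l : Fin d, (k j l : ℝ) * M⁻¹ l ⟨d - 1, by omega⟩ = 0) ↔
    (∃ (t : ℝ) (z : Fin d → ℤ), t ≠ 0 ∧
      ∀ l : Fin d, M⁻¹ l ⟨d - 1, by omega⟩ = t * (z l : ℝ)) := by
  obtain ⟨n, rfl⟩ : ∃ n, d = n + 1 := ⟨d - 1, by omega⟩
  have hv : (fun l : Fin (n+1) => M⁻¹ l ⟨n + 1 - 1, by omega⟩) ≠ 0 := by
    intro h
    have h1 : M * M⁻¹ = 1 := Matrix.mul_nonsing_inv M (isUnit_iff_ne_zero.mpr hM)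
    have h2 := congrFun (congrFun h1 ⟨n + 1 - 1, by omega⟩) ⟨n + 1 - 1, by omega⟩
    rw [Matrix.mul_apply] at h2
    have h3 : ∀ m : Fin (n+1), M⁻¹ m ⟨n + 1 - 1, by omega⟩ = 0 := fun m => congrFun h m
    have h4 : ∀ m : Fin (n+1), M⁻¹ m (⟨n, by omega⟩ : Fin (n+1)) = 0 := h3
    simp [h4, Matrix.one_apply] at h2
  exact key n (fun l : Fin (n+1) => M⁻¹ l ⟨n + 1 - 1, by omega⟩) hv
end
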